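/- For all x, x̄ ∈ D = {x ∈ E : ⟨d, x⟩ ≥ 0}, the gradient of f satisfies ‖∇f(x) − ∇f(x̄)‖² ≤ (12‖d‖⁴/d₀⁶)·‖Q‖²·‖x̄ − x‖⁶ + 12·( (‖d‖²/d₀³)·‖h‖ + (‖d‖/d₀²)·‖Q‖ )²·‖x̄ − x‖⁴ + 3·( ‖Q‖/d₀ + (2‖d‖²/d₀³)·(‖Q‖·‖x‖² + |⟨h, x⟩ − h₀|) + (2‖d‖/d₀²)·‖Q x − h‖ )²·‖x̄ − x‖². -/

import Mathlib

open scoped RealInnerProductSpace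

lemma aux_grad {E : Type*} [NormedAddCommGroup E] [InnerProductSpace ℝ E] [CompleteSpace E]
    (Q : E →L[ℝ] E) (hQ : ∀ x y : E, ⟪Q x, y⟫ = ⟪x, Q y⟫)
    (d h : E) (d₀ h₀ : ℝ) (x : E) (hw : ⟪d, x⟫ + d₀ ≠ 0) :
    HasGradientAt (fun y => ((1 : ℝ) / 2 * ⟪y, Q y⟫ - ⟪h, y⟫ + h₀) / (⟪d, y⟫ + d₀))
      ((⟪d, x⟫ + d₀)⁻¹ • (Q x - h)
        - (((1 : ℝ) / 2 * ⟪x, Q x⟫ - ⟪h, x⟫ + h₀) / (⟪d, x⟫ + d₀) ^ 2) • d) x := by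
  rw [hasGradientAt_iff_hasFDerivAt]
  have h1 : HasFDerivAt (fun y : E => ⟪y, Q y⟫)
      ((fderivInnerCLM ℝ (x, Q x)).comp ((ContinuousLinearMap.id ℝ E).prod Q)) x :=
    (hasFDerivAt_id x).inner ℝ Q.hasFDerivAt
  have h2 : HasFDerivAt (fun y : E => ⟪h, y⟫) (innerSL ℝ h) x := (innerSL ℝ h).hasFDerivAt
  have h3 : HasFDerivAt (fun y : E => ⟪d, y⟫) (innerSL ℝ d) x := (innerSL ℝ d).hasFDerivAt
  have hnum : HasFDerivAt (fun y : E => (1 : ℝ) / 2 * ⟪y, Q y⟫ - ⟪h, y⟫ + h₀)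
      (((1:ℝ)/2) • ((fderivInnerCLM ℝ (x, Q x)).comp ((ContinuousLinearMap.id ℝ E).prod Q))
        - innerSL ℝ h) x := by
    simpa [smul_eq_mul] using ((h1.const_smul ((1:ℝ)/2)).sub h2).add_const h₀
  have hden : HasFDerivAt (fun y : E => ⟪d, y⟫ + d₀) (innerSL ℝ d) x := by
    simpa using h3.add_const d₀
  have hinv : HasFDerivAt (fun y : E => (⟪d, y⟫ + d₀)⁻¹)
      ((-(((⟪d, x⟫ + d₀) ^ 2)⁻¹)) • innerSL ℝ d) x :=
    (hasDerivAt_inv hw).comp_hasFDerivAt x hden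
  have hmul := hnum.mul hinv
  have key : HasFDerivAt (fun y : E => ((1 : ℝ) / 2 * ⟪y, Q y⟫ - ⟪h, y⟫ + h₀) / (⟪d, y⟫ + d₀))
      (((1 : ℝ) / 2 * ⟪x, Q x⟫ - ⟪h, x⟫ + h₀) • ((-(((⟪d, x⟫ + d₀) ^ 2)⁻¹)) • innerSL ℝ d)
        + (⟪d, x⟫ + d₀)⁻¹ •
          (((1:ℝ)/2) • ((fderivInnerCLM ℝ (x, Q x)).comp ((ContinuousLinearMap.id ℝ E).prod Q))
            - innerSL ℝ h)) x := by
    simp only [div_eq_mul_inv]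
    exact hmul
  refine key.congr_fderiv (Eq.symm ?_)
  ext y
  simp only [ContinuousLinearMap.coe_smul', Pi.smul_apply, ContinuousLinearMap.coe_sub',
    Pi.sub_apply, ContinuousLinearMap.comp_apply, ContinuousLinearMap.prod_apply,
    ContinuousLinearMap.coe_id', id_eq, fderivInnerCLM_apply, innerSL_apply_apply,
    InnerProductSpace.toDual_apply_apply, ContinuousLinearMap.add_apply, smul_eq_mul]
  have e1 : ⟪x, Q y⟫ = ⟪Q x, y⟫ := (hQ x y).symm
  have e2 : ⟪y, Q x⟫ = ⟪Q x, y⟫ := real_inner_comm _ _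
  rw [inner_sub_left, inner_smul_left, inner_sub_left, inner_smul_left]
  simp only [RCLike.conj_to_real, conj_trivial]
  rw [e1, e2]
  field_simp
  ring


set_option maxHeartbeats 1000000 in
theorem quadratic_fractional_generalized_lipschitz
    {E : Type*} [NormedAddCommGroup E] [InnerProductSpace ℝ E] [FiniteDimensional ℝ E]
    (Q : E →L[ℝ] E) (hQ : ∀ x y : E, ⟪Q x, y⟫ = ⟪x, Q y⟫)
    (d h : E) (d₀ h₀ : ℝ) (hd₀ : 0 < d₀)
    (f : E → ℝ)
    (hf : ∀ x : E, f x = ((1 : ℝ) / 2 * ⟪x, Q x⟫ - ⟪h, x⟫ + h₀) / (⟪d, x⟫ + d₀))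
    (f' : E → E)
    (hgrad : ∀ x : E, -d₀ < ⟪d, x⟫ → HasGradientAt f (f' x) x) :
    ∀ x : E, 0 ≤ ⟪d, x⟫ → ∀ xb : E, 0 ≤ ⟪d, xb⟫ →
      ‖f' x - f' xb‖ ^ 2 ≤
        12 * ‖d‖ ^ 4 / d₀ ^ 6 * ‖Q‖ ^ 2 * ‖xb - x‖ ^ 6
          + 12 * (‖d‖ ^ 2 / d₀ ^ 3 * ‖h‖ + ‖d‖ / d₀ ^ 2 * ‖Q‖) ^ 2 * ‖xb - x‖ ^ 4
          + 3 * (‖Q‖ / d₀ + 2 * ‖d‖ ^ 2 / d₀ ^ 3 * (‖Q‖ * ‖x‖ ^ 2 + |⟪h, x⟫ - h₀|)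
              + 2 * ‖d‖ / d₀ ^ 2 * ‖Q x - h‖) ^ 2 * ‖xb - x‖ ^ 2 := by
  have hfe : f = fun y => ((1 : ℝ) / 2 * ⟪y, Q y⟫ - ⟪h, y⟫ + h₀) / (⟪d, y⟫ + d₀) := funext hf
  subst hfe
  intro x hx xb hxb
  obtain ⟨s, rfl⟩ : ∃ s, xb = x + s := ⟨xb - x, by abel⟩
  rw [inner_add_right] at hxb
  have hw0 : (0:ℝ) < ⟪d, x⟫ + d₀ := by linarith
  have hwb0 : (0:ℝ) < ⟪d, x⟫ + ⟪d, s⟫ + d₀ := by linarith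
  have hGx : f' x = (⟪d, x⟫ + d₀)⁻¹ • (Q x - h)
      - (((1 : ℝ) / 2 * ⟪x, Q x⟫ - ⟪h, x⟫ + h₀) / (⟪d, x⟫ + d₀) ^ 2) • d :=
    (hgrad x (by linarith)).unique (aux_grad Q hQ d h d₀ h₀ x hw0.ne')
  have hGxb : f' (x + s) = (⟪d, x + s⟫ + d₀)⁻¹ • (Q (x + s) - h)
      - (((1 : ℝ) / 2 * ⟪x + s, Q (x + s)⟫ - ⟪h, x + s⟫ + h₀) / (⟪d, x + s⟫ + d₀) ^ 2) • d :=
    (hgrad (x + s) (by rw [inner_add_right]; linarith)).unique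
      (aux_grad Q hQ d h d₀ h₀ (x + s) (by rw [inner_add_right]; exact hwb0.ne'))
  have key : f' x - f' (x + s)
      = (⟪d, s⟫ / ((⟪d, x⟫ + d₀) * (⟪d, x⟫ + ⟪d, s⟫ + d₀))) • (Q x - h)
        - ((⟪d, x⟫ + ⟪d, s⟫ + d₀)⁻¹) • Q s
        - ((((1:ℝ)/2 * ⟪x, Q x⟫ - ⟪h, x⟫ + h₀) * ⟪d, s⟫
              * ((⟪d, x⟫ + d₀) + (⟪d, x⟫ + ⟪d, s⟫ + d₀)))
            / ((⟪d, x⟫ + d₀) ^ 2 * (⟪d, x⟫ + ⟪d, s⟫ + d₀) ^ 2)) • d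
        + ((⟪x, Q s⟫ - ⟪h, s⟫ + (1:ℝ)/2 * ⟪s, Q s⟫) / (⟪d, x⟫ + ⟪d, s⟫ + d₀) ^ 2) • d := by
    rw [hGx, hGxb]
    have e : ⟪s, Q x⟫ = ⟪x, Q s⟫ := by rw [real_inner_comm]; exact hQ x s
    simp only [map_add, inner_add_left, inner_add_right]
    rw [e]
    match_scalars <;> field_simp <;> ring
  have hds : |⟪d, s⟫| ≤ ‖d‖ * ‖s‖ := abs_real_inner_le_norm d s
  have hQs : ‖Q s‖ ≤ ‖Q‖ * ‖s‖ := Q.le_opNorm s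
  have hd1 : d₀ ≤ ⟪d, x⟫ + d₀ := by linarith
  have hd2 : d₀ ≤ ⟪d, x⟫ + ⟪d, s⟫ + d₀ := by linarith
  have hb1 : ‖(⟪d, s⟫ / ((⟪d, x⟫ + d₀) * (⟪d, x⟫ + ⟪d, s⟫ + d₀))) • (Q x - h)‖
      ≤ ‖d‖ / d₀ ^ 2 * ‖Q x - h‖ * ‖s‖ := by
    rw [norm_smul, Real.norm_eq_abs, abs_div, abs_of_pos (mul_pos hw0 hwb0)]
    calc |⟪d, s⟫| / ((⟪d, x⟫ + d₀) * (⟪d, x⟫ + ⟪d, s⟫ + d₀)) * ‖Q x - h‖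
        ≤ (‖d‖ * ‖s‖) / (d₀ * d₀) * ‖Q x - h‖ := by gcongr
      _ = ‖d‖ / d₀ ^ 2 * ‖Q x - h‖ * ‖s‖ := by ring
  have hb2 : ‖((⟪d, x⟫ + ⟪d, s⟫ + d₀)⁻¹) • Q s‖ ≤ ‖Q‖ / d₀ * ‖s‖ := by
    rw [norm_smul, Real.norm_eq_abs, abs_inv, abs_of_pos hwb0]
    calc (⟪d, x⟫ + ⟪d, s⟫ + d₀)⁻¹ * ‖Q s‖ ≤ d₀⁻¹ * (‖Q‖ * ‖s‖) := by gcongr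
      _ = ‖Q‖ / d₀ * ‖s‖ := by ring
  have hgb : |(1:ℝ)/2 * ⟪x, Q x⟫ - ⟪h, x⟫ + h₀| ≤ ‖Q‖ * ‖x‖ ^ 2 + |⟪h, x⟫ - h₀| := by
    have h1 : |⟪x, Q x⟫| ≤ ‖Q‖ * ‖x‖ ^ 2 := by
      have := abs_real_inner_le_norm x (Q x)
      have := Q.le_opNorm x
      nlinarith [norm_nonneg x]
    have h2 : (1:ℝ)/2 * ⟪x, Q x⟫ - ⟪h, x⟫ + h₀ = 1/2 * ⟪x, Q x⟫ - (⟪h, x⟫ - h₀) := by ring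
    have hpos : (0:ℝ) ≤ ‖Q‖ * ‖x‖ ^ 2 := by positivity
    rw [h2]
    calc |1/2 * ⟪x, Q x⟫ - (⟪h, x⟫ - h₀)| ≤ |1/2 * ⟪x, Q x⟫| + |⟪h, x⟫ - h₀| := abs_sub _ _
      _ ≤ ‖Q‖ * ‖x‖ ^ 2 + |⟪h, x⟫ - h₀| := by
          rw [abs_mul]
          have he : |(1:ℝ)/2| = 1/2 := by norm_num
          rw [he]; linarith
  have hM : (0:ℝ) ≤ ‖Q‖ * ‖x‖ ^ 2 + |⟪h, x⟫ - h₀| := by positivity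
  have hb3 : ‖((((1:ℝ)/2 * ⟪x, Q x⟫ - ⟪h, x⟫ + h₀) * ⟪d, s⟫
            * ((⟪d, x⟫ + d₀) + (⟪d, x⟫ + ⟪d, s⟫ + d₀)))
          / ((⟪d, x⟫ + d₀) ^ 2 * (⟪d, x⟫ + ⟪d, s⟫ + d₀) ^ 2)) • d‖
      ≤ 2 * ‖d‖ ^ 2 / d₀ ^ 3 * (‖Q‖ * ‖x‖ ^ 2 + |⟪h, x⟫ - h₀|) * ‖s‖ := by
    have hdenpos : (0:ℝ) < (⟪d, x⟫ + d₀) ^ 2 * (⟪d, x⟫ + ⟪d, s⟫ + d₀) ^ 2 :=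
      mul_pos (pow_pos hw0 2) (pow_pos hwb0 2)
    rw [norm_smul, Real.norm_eq_abs, abs_div, abs_of_pos hdenpos]
    have hnum_le : |((1:ℝ)/2 * ⟪x, Q x⟫ - ⟪h, x⟫ + h₀) * ⟪d, s⟫
          * ((⟪d, x⟫ + d₀) + (⟪d, x⟫ + ⟪d, s⟫ + d₀))|
        ≤ (‖Q‖ * ‖x‖ ^ 2 + |⟪h, x⟫ - h₀|) * (‖d‖ * ‖s‖)
          * ((⟪d, x⟫ + d₀) + (⟪d, x⟫ + ⟪d, s⟫ + d₀)) := by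
      rw [abs_mul, abs_mul, abs_of_pos (show (0:ℝ) < (⟪d, x⟫ + d₀) + (⟪d, x⟫ + ⟪d, s⟫ + d₀)
        by linarith)]
      exact mul_le_mul (mul_le_mul hgb hds (abs_nonneg _) hM) le_rfl (by linarith)
        (by positivity)
    have k0 : d₀ * d₀ ≤ (⟪d, x⟫ + ⟪d, s⟫ + d₀) * (⟪d, x⟫ + ⟪d, s⟫ + d₀) :=
      mul_le_mul hd2 hd2 hd₀.le (by linarith)
    have k0' : d₀ * d₀ ≤ (⟪d, x⟫ + d₀) * (⟪d, x⟫ + ⟪d, s⟫ + d₀) :=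
      mul_le_mul hd1 hd2 hd₀.le (by linarith)
    have k1 : d₀ * (d₀ * d₀) ≤ (⟪d, x⟫ + d₀) * ((⟪d, x⟫ + ⟪d, s⟫ + d₀) * (⟪d, x⟫ + ⟪d, s⟫ + d₀)) :=
      mul_le_mul hd1 k0 (by positivity) (by linarith)
    have k2 : d₀ * (d₀ * d₀) ≤ (⟪d, x⟫ + d₀) * ((⟪d, x⟫ + d₀) * (⟪d, x⟫ + ⟪d, s⟫ + d₀)) :=
      mul_le_mul hd1 k0' (by positivity) (by linarith)
    have hfrac : ((⟪d, x⟫ + d₀) + (⟪d, x⟫ + ⟪d, s⟫ + d₀))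
          / ((⟪d, x⟫ + d₀) ^ 2 * (⟪d, x⟫ + ⟪d, s⟫ + d₀) ^ 2) ≤ 2 / d₀ ^ 3 := by
      rw [div_le_div_iff₀ hdenpos (by positivity)]
      nlinarith [mul_le_mul_of_nonneg_left k1 hw0.le, mul_le_mul_of_nonneg_left k2 hwb0.le,
        mul_pos hw0 hwb0]
    calc |((1:ℝ)/2 * ⟪x, Q x⟫ - ⟪h, x⟫ + h₀) * ⟪d, s⟫
            * ((⟪d, x⟫ + d₀) + (⟪d, x⟫ + ⟪d, s⟫ + d₀))|
          / ((⟪d, x⟫ + d₀) ^ 2 * (⟪d, x⟫ + ⟪d, s⟫ + d₀) ^ 2) * ‖d‖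
        ≤ ((‖Q‖ * ‖x‖ ^ 2 + |⟪h, x⟫ - h₀|) * (‖d‖ * ‖s‖)
              * ((⟪d, x⟫ + d₀) + (⟪d, x⟫ + ⟪d, s⟫ + d₀)))
            / ((⟪d, x⟫ + d₀) ^ 2 * (⟪d, x⟫ + ⟪d, s⟫ + d₀) ^ 2) * ‖d‖ := by
          gcongr
      _ = (‖Q‖ * ‖x‖ ^ 2 + |⟪h, x⟫ - h₀|) * (‖d‖ * ‖s‖)
            * (((⟪d, x⟫ + d₀) + (⟪d, x⟫ + ⟪d, s⟫ + d₀))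
              / ((⟪d, x⟫ + d₀) ^ 2 * (⟪d, x⟫ + ⟪d, s⟫ + d₀) ^ 2)) * ‖d‖ := by
          ring
      _ ≤ (‖Q‖ * ‖x‖ ^ 2 + |⟪h, x⟫ - h₀|) * (‖d‖ * ‖s‖) * (2 / d₀ ^ 3) * ‖d‖ := by
          have hnn : (0:ℝ) ≤ (‖Q‖ * ‖x‖ ^ 2 + |⟪h, x⟫ - h₀|) * (‖d‖ * ‖s‖) := by positivity
          gcongr
      _ = 2 * ‖d‖ ^ 2 / d₀ ^ 3 * (‖Q‖ * ‖x‖ ^ 2 + |⟪h, x⟫ - h₀|) * ‖s‖ := by ring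
  have hb4 : ‖((⟪x, Q s⟫ - ⟪h, s⟫ + (1:ℝ)/2 * ⟪s, Q s⟫) / (⟪d, x⟫ + ⟪d, s⟫ + d₀) ^ 2) • d‖
      ≤ ‖d‖ / d₀ ^ 2 * ‖Q x - h‖ * ‖s‖ + ‖d‖ / d₀ ^ 2 * ‖Q‖ * ‖s‖ ^ 2 := by
    rw [norm_smul, Real.norm_eq_abs, abs_div, abs_of_pos (pow_pos hwb0 2)]
    have e4 : ⟪x, Q s⟫ - ⟪h, s⟫ = ⟪Q x - h, s⟫ := by rw [inner_sub_left, hQ]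
    have h1 : |⟪x, Q s⟫ - ⟪h, s⟫ + (1:ℝ)/2 * ⟪s, Q s⟫|
        ≤ ‖Q x - h‖ * ‖s‖ + ‖Q‖ * ‖s‖ ^ 2 := by
      have ha : |⟪Q x - h, s⟫| ≤ ‖Q x - h‖ * ‖s‖ := abs_real_inner_le_norm _ _
      have hb : |⟪s, Q s⟫| ≤ ‖Q‖ * ‖s‖ ^ 2 := by
        have := abs_real_inner_le_norm s (Q s)
        nlinarith [norm_nonneg s]
      calc |⟪x, Q s⟫ - ⟪h, s⟫ + (1:ℝ)/2 * ⟪s, Q s⟫|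
          ≤ |⟪x, Q s⟫ - ⟪h, s⟫| + |(1:ℝ)/2 * ⟪s, Q s⟫| := abs_add_le _ _
        _ ≤ ‖Q x - h‖ * ‖s‖ + ‖Q‖ * ‖s‖ ^ 2 := by
            rw [e4, abs_mul]
            have he : |(1:ℝ)/2| = 1/2 := by norm_num
            have hnn : (0:ℝ) ≤ ‖Q‖ * ‖s‖ ^ 2 := by positivity
            have hnn2 : (0:ℝ) ≤ |⟪s, Q s⟫| := abs_nonneg _
            rw [he]; linarith
    calc |⟪x, Q s⟫ - ⟪h, s⟫ + (1:ℝ)/2 * ⟪s, Q s⟫| / (⟪d, x⟫ + ⟪d, s⟫ + d₀) ^ 2 * ‖d‖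
        ≤ (‖Q x - h‖ * ‖s‖ + ‖Q‖ * ‖s‖ ^ 2) / d₀ ^ 2 * ‖d‖ := by gcongr
      _ = ‖d‖ / d₀ ^ 2 * ‖Q x - h‖ * ‖s‖ + ‖d‖ / d₀ ^ 2 * ‖Q‖ * ‖s‖ ^ 2 := by ring
  have gen : ∀ a b c e : E, ‖a - b - c + e‖ ≤ ‖a‖ + ‖b‖ + ‖c‖ + ‖e‖ := by
    intro a b c e
    calc ‖a - b - c + e‖ ≤ ‖a - b - c‖ + ‖e‖ := norm_add_le _ _
      _ ≤ ‖a - b‖ + ‖c‖ + ‖e‖ := by have := norm_sub_le (a - b) c; linarith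
      _ ≤ ‖a‖ + ‖b‖ + ‖c‖ + ‖e‖ := by have := norm_sub_le a b; linarith
  have tri : ‖f' x - f' (x + s)‖
      ≤ ‖d‖ / d₀ ^ 2 * ‖Q x - h‖ * ‖s‖ + ‖Q‖ / d₀ * ‖s‖
        + 2 * ‖d‖ ^ 2 / d₀ ^ 3 * (‖Q‖ * ‖x‖ ^ 2 + |⟪h, x⟫ - h₀|) * ‖s‖
        + (‖d‖ / d₀ ^ 2 * ‖Q x - h‖ * ‖s‖ + ‖d‖ / d₀ ^ 2 * ‖Q‖ * ‖s‖ ^ 2) := by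
    rw [key]
    exact le_trans (gen _ _ _ _)
      (add_le_add (add_le_add (add_le_add hb1 hb2) hb3) hb4)
  set C := ‖Q‖ / d₀ + 2 * ‖d‖ ^ 2 / d₀ ^ 3 * (‖Q‖ * ‖x‖ ^ 2 + |⟪h, x⟫ - h₀|)
      + 2 * ‖d‖ / d₀ ^ 2 * ‖Q x - h‖ with hC
  set B := ‖d‖ ^ 2 / d₀ ^ 3 * ‖h‖ + ‖d‖ / d₀ ^ 2 * ‖Q‖ with hB
  clear_value C B
  have hΔ : ‖f' x - f' (x + s)‖ ≤ C * ‖s‖ + 2 * B * ‖s‖ ^ 2 := by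
    have hB' : ‖d‖ / d₀ ^ 2 * ‖Q‖ * ‖s‖ ^ 2 ≤ 2 * B * ‖s‖ ^ 2 := by
      have p1 : (0:ℝ) ≤ ‖d‖ ^ 2 / d₀ ^ 3 * ‖h‖ := by positivity
      have p2 : (0:ℝ) ≤ ‖d‖ / d₀ ^ 2 * ‖Q‖ := by positivity
      nlinarith [sq_nonneg ‖s‖]
    have expand : C * ‖s‖ = ‖Q‖ / d₀ * ‖s‖
        + 2 * ‖d‖ ^ 2 / d₀ ^ 3 * (‖Q‖ * ‖x‖ ^ 2 + |⟪h, x⟫ - h₀|) * ‖s‖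
        + 2 * (‖d‖ / d₀ ^ 2 * ‖Q x - h‖ * ‖s‖) := by rw [hC]; ring
    linarith
  have hss : x + s - x = s := by abel
  rw [hss]
  have hC0 : (0:ℝ) ≤ C := by rw [hC]; positivity
  have hB0 : (0:ℝ) ≤ B := by rw [hB]; positivity
  have hsq : ‖f' x - f' (x + s)‖ ^ 2 ≤ (C * ‖s‖ + 2 * B * ‖s‖ ^ 2) ^ 2 :=
    pow_le_pow_left₀ (norm_nonneg _) hΔ 2
  have hA : (0:ℝ) ≤ 12 * ‖d‖ ^ 4 / d₀ ^ 6 * ‖Q‖ ^ 2 * ‖s‖ ^ 6 := by positivity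
  have e1 : (C * ‖s‖ + 2 * B * ‖s‖ ^ 2) ^ 2 ≤ 3 * C ^ 2 * ‖s‖ ^ 2 + 12 * B ^ 2 * ‖s‖ ^ 4 := by
    nlinarith [sq_nonneg (C * ‖s‖ - 2 * B * ‖s‖ ^ 2),
      mul_nonneg (mul_nonneg hC0 hC0) (sq_nonneg ‖s‖),
      mul_nonneg (mul_nonneg hB0 hB0) (sq_nonneg (‖s‖ ^ 2))]
  linarith [hsq, e1, hA]
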